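/- Let α > 0 and β > 0. The average total reward R_{α,β} is strictly concave on the set of strictly positive distributions in Δ; that is, for all p, q ∈ Δ with p(s,a) > 0 and q(s,a) > 0 for all (s,a) and p ≠ q, and all t ∈ (0,1), R_{α,β}(t·p + (1−t)·q) > t·R_{α,β}(p) + (1−t)·R_{α,β}(q). -/

import Mathlib

open Finset

/-- The average total reward `R_{α,β}(p)`, with the convention `0 · log 0 = 0`. -/
noncomputable def Ravg {S A : Type} [Fintype S] [Fintype A]
    (r : S → A → ℝ) (α β : ℝ) (p : S → A → ℝ) : ℝ :=
  (∑ s, ∑ a, p s a * r s a)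
    - α * ∑ s, ∑ a, p s a * Real.log (p s a)
    - (β - α) * ∑ s, ∑ a, p s a * Real.log (∑ b, p s b)

open Finset

private lemma mul_log_le {x y t : ℝ} (hx : 0 ≤ x) (hy : 0 ≤ y)
    (ht0 : 0 ≤ t) (ht1 : t ≤ 1) :
    (t*x + (1-t)*y) * Real.log (t*x + (1-t)*y)
      ≤ t * (x * Real.log x) + (1-t) * (y * Real.log y) := by
  have := Real.strictConvexOn_mul_log.convexOn.2 (Set.mem_Ici.2 hx) (Set.mem_Ici.2 hy)
    ht0 (by linarith : (0:ℝ) ≤ 1 - t) (by ring : t + (1 - t) = 1)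
  simpa [smul_eq_mul] using this

private lemma mul_log_lt {x y t : ℝ} (hx : 0 ≤ x) (hy : 0 ≤ y) (hne : x ≠ y)
    (ht0 : 0 < t) (ht1 : t < 1) :
    (t*x + (1-t)*y) * Real.log (t*x + (1-t)*y)
      < t * (x * Real.log x) + (1-t) * (y * Real.log y) := by
  have := Real.strictConvexOn_mul_log.2 (Set.mem_Ici.2 hx) (Set.mem_Ici.2 hy)
    hne ht0 (by linarith : (0:ℝ) < 1 - t) (by ring : t + (1 - t) = 1)
  simpa [smul_eq_mul] using this

private lemma logsum_le {a b c d : ℝ} (ha : 0 < a) (hb : 0 < b) (hc : 0 < c) (hd : 0 < d) :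
    (a + c) * (Real.log (a + c) - Real.log (b + d))
      ≤ a * (Real.log a - Real.log b) + c * (Real.log c - Real.log d) := by
  have hL : (0:ℝ) < b + d := by linarith
  have hab : b/(b+d) + d/(b+d) = 1 := by field_simp
  have key := Real.strictConvexOn_mul_log.convexOn.2 (Set.mem_Ici.2 (div_pos ha hb).le)
    (Set.mem_Ici.2 (div_pos hc hd).le) (by positivity) (by positivity) hab
  simp only [smul_eq_mul] at key
  have e1 : b/(b+d)*(a/b) + d/(b+d)*(c/d) = (a+c)/(b+d) := by field_simp
  rw [e1] at key
  have e2 : (a+c)/(b+d) * Real.log ((a+c)/(b+d))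
      = ((a+c) * (Real.log (a+c) - Real.log (b+d)))/(b+d) := by
    rw [Real.log_div (by positivity) hL.ne']; ring
  have e3 : b/(b+d)*(a/b*Real.log (a/b)) = (a * (Real.log a - Real.log b))/(b+d) := by
    rw [Real.log_div ha.ne' hb.ne']; field_simp
  have e4 : d/(b+d)*(c/d*Real.log (c/d)) = (c * (Real.log c - Real.log d))/(b+d) := by
    rw [Real.log_div hc.ne' hd.ne']; field_simp
  rw [e2, e3, e4, ← add_div] at key
  exact (div_le_div_iff_of_pos_right hL).1 key

private lemma logsum_lt {a b c d : ℝ} (ha : 0 < a) (hb : 0 < b) (hc : 0 < c) (hd : 0 < d)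
    (hne : a * d ≠ c * b) :
    (a + c) * (Real.log (a + c) - Real.log (b + d))
      < a * (Real.log a - Real.log b) + c * (Real.log c - Real.log d) := by
  have hL : (0:ℝ) < b + d := by linarith
  have hab : b/(b+d) + d/(b+d) = 1 := by field_simp
  have hne' : a/b ≠ c/d := fun h => hne ((div_eq_div_iff hb.ne' hd.ne').1 h)
  have key := Real.strictConvexOn_mul_log.2 (Set.mem_Ici.2 (div_pos ha hb).le)
    (Set.mem_Ici.2 (div_pos hc hd).le) hne' (by positivity) (by positivity) hab
  simp only [smul_eq_mul] at key
  have e1 : b/(b+d)*(a/b) + d/(b+d)*(c/d) = (a+c)/(b+d) := by field_simp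
  rw [e1] at key
  have e2 : (a+c)/(b+d) * Real.log ((a+c)/(b+d))
      = ((a+c) * (Real.log (a+c) - Real.log (b+d)))/(b+d) := by
    rw [Real.log_div (by positivity) hL.ne']; ring
  have e3 : b/(b+d)*(a/b*Real.log (a/b)) = (a * (Real.log a - Real.log b))/(b+d) := by
    rw [Real.log_div ha.ne' hb.ne']; field_simp
  have e4 : d/(b+d)*(c/d*Real.log (c/d)) = (c * (Real.log c - Real.log d))/(b+d) := by
    rw [Real.log_div hc.ne' hd.ne']; field_simp
  rw [e2, e3, e4, ← add_div] at key
  exact (div_lt_div_iff_of_pos_right hL).1 key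

private lemma cond_le {x X y Y t : ℝ} (hx : 0 < x) (hX : 0 < X) (hy : 0 < y) (hY : 0 < Y)
    (ht0 : 0 < t) (ht1 : t < 1) :
    (t*x + (1-t)*y) * (Real.log (t*x + (1-t)*y) - Real.log (t*X + (1-t)*Y))
      ≤ t*(x*(Real.log x - Real.log X)) + (1-t)*(y*(Real.log y - Real.log Y)) := by
  have h1t : (0:ℝ) < 1 - t := by linarith
  have key := logsum_le (mul_pos ht0 hx) (mul_pos ht0 hX) (mul_pos h1t hy) (mul_pos h1t hY)
  rw [Real.log_mul ht0.ne' hx.ne', Real.log_mul ht0.ne' hX.ne',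
    Real.log_mul h1t.ne' hy.ne', Real.log_mul h1t.ne' hY.ne'] at key
  calc (t*x + (1-t)*y) * (Real.log (t*x + (1-t)*y) - Real.log (t*X + (1-t)*Y))
      ≤ t*x*((Real.log t + Real.log x) - (Real.log t + Real.log X))
        + (1-t)*y*((Real.log (1-t) + Real.log y) - (Real.log (1-t) + Real.log Y)) := key
    _ = t*(x*(Real.log x - Real.log X)) + (1-t)*(y*(Real.log y - Real.log Y)) := by ring

private lemma cond_lt {x X y Y t : ℝ} (hx : 0 < x) (hX : 0 < X) (hy : 0 < y) (hY : 0 < Y)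
    (ht0 : 0 < t) (ht1 : t < 1) (hne : x * Y ≠ y * X) :
    (t*x + (1-t)*y) * (Real.log (t*x + (1-t)*y) - Real.log (t*X + (1-t)*Y))
      < t*(x*(Real.log x - Real.log X)) + (1-t)*(y*(Real.log y - Real.log Y)) := by
  have h1t : (0:ℝ) < 1 - t := by linarith
  have hne2 : t*x*((1-t)*Y) ≠ (1-t)*y*(t*X) := by
    intro h
    exact hne (mul_left_cancel₀ (mul_pos ht0 h1t).ne'
      (by linear_combination h : (t*(1-t))*(x*Y) = (t*(1-t))*(y*X)))
  have key := logsum_lt (mul_pos ht0 hx) (mul_pos ht0 hX) (mul_pos h1t hy) (mul_pos h1t hY) hne2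
  rw [Real.log_mul ht0.ne' hx.ne', Real.log_mul ht0.ne' hX.ne',
    Real.log_mul h1t.ne' hy.ne', Real.log_mul h1t.ne' hY.ne'] at key
  calc (t*x + (1-t)*y) * (Real.log (t*x + (1-t)*y) - Real.log (t*X + (1-t)*Y))
      < t*x*((Real.log t + Real.log x) - (Real.log t + Real.log X))
        + (1-t)*y*((Real.log (1-t) + Real.log y) - (Real.log (1-t) + Real.log Y)) := key
    _ = t*(x*(Real.log x - Real.log X)) + (1-t)*(y*(Real.log y - Real.log Y)) := by ring

private noncomputable def Gfun {A : Type} [Fintype A] (α β : ℝ) (x : A → ℝ) : ℝ :=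
  α * ∑ a, x a * Real.log (x a)
    + (β - α) * ((∑ a, x a) * Real.log (∑ a, x a))

private lemma Gfun_lt {A : Type} [Fintype A] [Nonempty A] {α β : ℝ} (hα : 0 < α) (hβ : 0 < β)
    {x y : A → ℝ} (hx : ∀ a, 0 < x a) (hy : ∀ a, 0 < y a) {t : ℝ} (ht0 : 0 < t) (ht1 : t < 1)
    (hne : x ≠ y) :
    Gfun α β (fun a => t * x a + (1-t) * y a) < t * Gfun α β x + (1-t) * Gfun α β y := by
  have h1t : (0:ℝ) < 1 - t := by linarith
  set X := ∑ a, x a with hXdef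
  set Y := ∑ a, y a with hYdef
  have hX : 0 < X := Finset.sum_pos (fun a _ => hx a) Finset.univ_nonempty
  have hY : 0 < Y := Finset.sum_pos (fun a _ => hy a) Finset.univ_nonempty
  have hMsum : ∑ a, (t * x a + (1-t) * y a) = t*X + (1-t)*Y := by
    rw [Finset.sum_add_distrib, ← Finset.mul_sum, ← Finset.mul_sum]
  have hM : 0 < t*X + (1-t)*Y := by positivity
  -- expand the conditional sums
  have expM : ∑ a, (t * x a + (1-t) * y a) * (Real.log (t * x a + (1-t) * y a)
        - Real.log (t*X + (1-t)*Y))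
      = (∑ a, (t * x a + (1-t) * y a) * Real.log (t * x a + (1-t) * y a))
        - (t*X + (1-t)*Y) * Real.log (t*X + (1-t)*Y) := by
    simp only [mul_sub]
    rw [Finset.sum_sub_distrib, ← Finset.sum_mul, hMsum]
  have expR : ∑ a, (t*(x a*(Real.log (x a) - Real.log X))
        + (1-t)*(y a*(Real.log (y a) - Real.log Y)))
      = t*((∑ a, x a * Real.log (x a)) - X * Real.log X)
        + (1-t)*((∑ a, y a * Real.log (y a)) - Y * Real.log Y) := by
    rw [Finset.sum_add_distrib, ← Finset.mul_sum, ← Finset.mul_sum]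
    simp only [mul_sub]
    rw [Finset.sum_sub_distrib, ← Finset.sum_mul, Finset.sum_sub_distrib, ← Finset.sum_mul,
      ← hXdef, ← hYdef]
    ring
  -- conditional part
  have Cle : ∑ a, (t * x a + (1-t) * y a) * (Real.log (t * x a + (1-t) * y a)
        - Real.log (t*X + (1-t)*Y))
      ≤ ∑ a, (t*(x a*(Real.log (x a) - Real.log X))
        + (1-t)*(y a*(Real.log (y a) - Real.log Y))) :=
    Finset.sum_le_sum fun a _ => cond_le (hx a) hX (hy a) hY ht0 ht1
  -- marginal part
  have Fle : (t*X + (1-t)*Y) * Real.log (t*X + (1-t)*Y)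
      ≤ t*(X * Real.log X) + (1-t)*(Y * Real.log Y) := mul_log_le hX.le hY.le ht0.le ht1.le
  rw [expM, expR] at Cle
  simp only [Gfun, hMsum]
  by_cases hXY : X = Y
  · -- marginals equal: strictness from the conditional part
    obtain ⟨a0, ha0⟩ := Function.ne_iff.1 hne
    have Clt : ∑ a, (t * x a + (1-t) * y a) * (Real.log (t * x a + (1-t) * y a)
          - Real.log (t*X + (1-t)*Y))
        < ∑ a, (t*(x a*(Real.log (x a) - Real.log X))
          + (1-t)*(y a*(Real.log (y a) - Real.log Y))) := by
      refine Finset.sum_lt_sum (fun a _ => cond_le (hx a) hX (hy a) hY ht0 ht1)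
        ⟨a0, Finset.mem_univ a0, cond_lt (hx a0) hX (hy a0) hY ht0 ht1 ?_⟩
      rw [← hXY]
      exact fun h => ha0 (mul_right_cancel₀ hX.ne' h)
    rw [expM, expR] at Clt
    nlinarith [mul_lt_mul_of_pos_left Clt hα, mul_le_mul_of_nonneg_left Fle hβ.le]
  · have Flt : (t*X + (1-t)*Y) * Real.log (t*X + (1-t)*Y)
        < t*(X * Real.log X) + (1-t)*(Y * Real.log Y) := mul_log_lt hX.le hY.le hXY ht0 ht1
    nlinarith [mul_le_mul_of_nonneg_left Cle hα.le, mul_lt_mul_of_pos_left Flt hβ]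

private lemma Gfun_le {A : Type} [Fintype A] [Nonempty A] {α β : ℝ} (hα : 0 < α) (hβ : 0 < β)
    {x y : A → ℝ} (hx : ∀ a, 0 < x a) (hy : ∀ a, 0 < y a) {t : ℝ} (ht0 : 0 < t) (ht1 : t < 1) :
    Gfun α β (fun a => t * x a + (1-t) * y a) ≤ t * Gfun α β x + (1-t) * Gfun α β y := by
  by_cases hne : x = y
  · subst hne
    have h : (fun a => t * x a + (1-t) * x a) = x := funext fun a => by ring
    rw [h]; ring_nf; exact le_refl _
  · exact (Gfun_lt hα hβ hx hy ht0 ht1 hne).le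

private lemma Ravg_eq {S A : Type} [Fintype S] [Fintype A]
    (r : S → A → ℝ) (α β : ℝ) (x : S → A → ℝ) :
    Ravg r α β x = (∑ s, ∑ a, x s a * r s a) - ∑ s, Gfun α β (x s) := by
  unfold Ravg Gfun
  have h : ∀ s : S, ∑ a, x s a * Real.log (∑ b, x s b)
      = (∑ a, x s a) * Real.log (∑ b, x s b) := fun s => (Finset.sum_mul _ _ _).symm
  simp only [h]
  rw [Finset.sum_add_distrib, ← Finset.mul_sum, ← Finset.mul_sum]
  ring

/-- for `α > 0`, `β > 0`, the average total reward is strictly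
concave on the set of strictly positive distributions in `Δ`. -/
theorem Ravg_strictConcave_on_pos {S A : Type} [Fintype S] [Fintype A]
    [Nonempty S] [Nonempty A]
    (r : S → A → ℝ) (α β : ℝ) (hα : 0 < α) (hβ : 0 < β)
    (p q : S → A → ℝ)
    (hp0 : ∀ s a, 0 < p s a) (hp1 : (∑ s, ∑ a, p s a) = 1)
    (hq0 : ∀ s a, 0 < q s a) (hq1 : (∑ s, ∑ a, q s a) = 1)
    (hpq : p ≠ q)
    (t : ℝ) (ht0 : 0 < t) (ht1 : t < 1) :
    Ravg r α β (fun s a => t * p s a + (1 - t) * q s a)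
      > t * Ravg r α β p + (1 - t) * Ravg r α β q := by
  rw [Ravg_eq, Ravg_eq, Ravg_eq]
  have hlin : ∑ s, ∑ a, (t * p s a + (1 - t) * q s a) * r s a
      = t * (∑ s, ∑ a, p s a * r s a) + (1 - t) * (∑ s, ∑ a, q s a * r s a) := by
    simp only [add_mul, Finset.sum_add_distrib, Finset.mul_sum, mul_assoc]
  have hsum : ∑ s, Gfun α β (fun a => t * p s a + (1 - t) * q s a)
      < ∑ s, (t * Gfun α β (p s) + (1 - t) * Gfun α β (q s)) := by
    obtain ⟨s0, hs0⟩ := Function.ne_iff.1 hpq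
    refine Finset.sum_lt_sum (fun s _ => Gfun_le hα hβ (hp0 s) (hq0 s) ht0 ht1)
      ⟨s0, Finset.mem_univ s0, Gfun_lt hα hβ (hp0 s0) (hq0 s0) ht0 ht1 hs0⟩
  rw [Finset.sum_add_distrib, ← Finset.mul_sum, ← Finset.mul_sum] at hsum
  linarith [hsum, hlin.ge, hlin.le]
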